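/- Let A be an integral domain and let p₁, p₂ be prime ideals of A such that the localization A_{p₁} is Noetherian and p₁ ∩ p₂ contains no nonzero prime ideal of A. Then for every t ∈ A: t ≠ 0 if and only if there exist w, x₁, x₂ ∈ A with t·w = x₁·x₂, x₁ ∉ p₁, and x₂ ∉ p₂. -/

import Mathlib

open scoped Classical

lemma minimalPrimes_finite_aux {R : Type*} [CommRing R] [IsNoetherianRing R] (I : Ideal R) :
    I.minimalPrimes.Finite := by
  rw [Ideal.minimalPrimes_eq_comap]
  exact ((minimalPrimes.finite_of_isNoetherianRing (R ⧸ I))).image _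

/-- Lemma 3.2: in a domain `A` with primes `p₁, p₂` such that `A_{p₁}` is Noetherian
and `p₁ ∩ p₂` contains no nonzero prime ideal, an element `t` is nonzero iff
`t·w = x₁·x₂` with `x₁ ∉ p₁`, `x₂ ∉ p₂` is solvable. -/
theorem stmt_4 {A : Type} [CommRing A] [IsDomain A]
    (p₁ p₂ : Ideal A) [p₁.IsPrime] [p₂.IsPrime]
    (hnoeth : IsNoetherianRing (Localization.AtPrime p₁))
    (hmeet : ∀ q : Ideal A, q.IsPrime → q ≤ p₁ ⊓ p₂ → q = ⊥)
    (t : A) :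
    t ≠ 0 ↔ ∃ w x₁ x₂ : A, t * w = x₁ * x₂ ∧ x₁ ∉ p₁ ∧ x₂ ∉ p₂ := by
  constructor
  · intro ht
    set L := Localization.AtPrime p₁
    set f : A →+* L := algebraMap A L
    have hf : Function.Injective f :=
      IsLocalization.injective L p₁.primeCompl_le_nonZeroDivisors
    set I : Ideal L := Ideal.span {f t}
    have hfin : I.minimalPrimes.Finite := minimalPrimes_finite_aux I
    -- For each minimal prime q of I, the comap is a nonzero prime ≤ p₁,
    -- hence not ≤ p₂; choose an element y q ∈ comap q with y q ∉ p₂.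
    have key : ∀ q ∈ hfin.toFinset, ∃ y : A, f y ∈ q ∧ y ∉ p₂ := by
      intro q hq
      rw [Set.Finite.mem_toFinset] at hq
      obtain ⟨⟨hqp, hIq⟩, -⟩ := hq
      set Q : Ideal A := q.comap f
      haveI : q.IsPrime := hqp
      haveI hQp : Q.IsPrime := Ideal.comap_isPrime f q
      have hQ1 : Q ≤ p₁ := by
        have h1 : q ≤ IsLocalRing.maximalIdeal L := IsLocalRing.le_maximalIdeal hqp.ne_top
        have h2 : Q ≤ (IsLocalRing.maximalIdeal L).comap f := Ideal.comap_mono h1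
        exact h2.trans (Localization.AtPrime.under_maximalIdeal (I := p₁)).le
      have htQ : t ∈ Q := by
        have : f t ∈ I := Ideal.subset_span rfl
        exact hIq this
      have hQne : Q ≠ ⊥ := by
        intro h
        rw [h] at htQ
        exact ht (by simpa using htQ)
      have : ¬ Q ≤ p₂ := by
        intro h
        exact hQne (hmeet Q hQp (le_inf hQ1 h))
      obtain ⟨y, hy1, hy2⟩ := Set.not_subset.mp this
      exact ⟨y, hy1, hy2⟩
    choose y hy1 hy2 using key
    set x := ∏ q ∈ hfin.toFinset.attach, y q.1 q.2 with hx
    -- x lies in every minimal prime of I, hence in the radical of I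
    have hxrad : f x ∈ I.radical := by
      rw [← Ideal.sInf_minimalPrimes, Ideal.mem_sInf]
      intro q hq
      have hq' : q ∈ hfin.toFinset := hfin.mem_toFinset.mpr hq
      have hdvd : y q hq' ∣ x := Finset.dvd_prod_of_mem _ (Finset.mem_attach _ ⟨q, hq'⟩)
      obtain ⟨c, hc⟩ := hdvd
      rw [hc, map_mul]
      exact Ideal.mul_mem_right _ _ (hy1 q hq')
    have hxp2 : x ∉ p₂ := by
      have : x ∈ p₂.primeCompl := Submonoid.prod_mem _ (fun q _ => hy2 q.1 q.2)
      exact this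
    obtain ⟨n, hn⟩ := hxrad
    rw [← map_pow] at hn
    rw [Ideal.mem_span_singleton'] at hn
    obtain ⟨z, hz⟩ := hn
    obtain ⟨⟨a, s⟩, hs⟩ := IsLocalization.surj p₁.primeCompl z
    refine ⟨a, s, x ^ n, ?_, s.2, fun h => hxp2 ((inferInstance : p₂.IsPrime).mem_of_pow_mem n h)⟩
    apply hf
    rw [map_mul, map_mul, ← hz, ← hs]
    ring
  · rintro ⟨w, x₁, x₂, heq, h1, h2⟩ rfl
    have hx₁ : x₁ ≠ 0 := fun h => h1 (h ▸ p₁.zero_mem)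
    have hx₂ : x₂ ≠ 0 := fun h => h2 (h ▸ p₂.zero_mem)
    have : (0 : A) = x₁ * x₂ := by simpa using heq
    exact mul_ne_zero hx₁ hx₂ this.symm
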